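/- Let R be a commutative noetherian ring. The assignment 𝒞 ↦ Ass 𝒞 := ⋃_{X ∈ 𝒞} Ass_R(X), sending a torsion-free class of the category of finitely generated R-modules to the union of the associated primes of its members, is a bijection from the set of torsion-free classes of mod R onto the set of all subsets of Spec R. -/

import Mathlib

universe u

section Defs

variable (A : Type u) [Ring A]

/-- `C` is a subcategory of `mod A`: it is closed under isomorphisms, contains the zero
modules, and consists of finitely generated modules. -/
def IsModSubcat (C : Set (ModuleCat.{u} A)) : Prop :=
  (∀ M N : ModuleCat.{u} A, (M ≃ₗ[A] N) → M ∈ C → N ∈ C) ∧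
  (∀ M : ModuleCat.{u} A, Subsingleton M → M ∈ C) ∧
  (∀ M ∈ C, Module.Finite A M)

/-- `C` is closed under submodules. -/
def SubmoduleClosed (C : Set (ModuleCat.{u} A)) : Prop :=
  ∀ M ∈ C, ∀ N : Submodule A M, ModuleCat.of A N ∈ C

/-- `C` is closed under quotient modules. -/
def QuotClosed (C : Set (ModuleCat.{u} A)) : Prop :=
  ∀ M ∈ C, ∀ N : Submodule A M, ModuleCat.of A (M ⧸ N) ∈ C

/-- `C` is closed under images: for every `A`-linear map `f : C₁ → C₂` with `C₁, C₂ ∈ C`,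
the image of `f` belongs to `C`. -/
def ImagesClosed (C : Set (ModuleCat.{u} A)) : Prop :=
  ∀ M₁ ∈ C, ∀ M₂ ∈ C, ∀ f : M₁ →ₗ[A] M₂, ModuleCat.of A (LinearMap.range f) ∈ C

/-- `C` is closed under kernels: for every `A`-linear map `f : C₁ → C₂` with `C₁, C₂ ∈ C`,
the kernel of `f` belongs to `C`. -/
def KernelsClosed (C : Set (ModuleCat.{u} A)) : Prop :=
  ∀ M₁ ∈ C, ∀ M₂ ∈ C, ∀ f : M₁ →ₗ[A] M₂, ModuleCat.of A (LinearMap.ker f) ∈ C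

/-- `C` is closed under extensions: for every short exact sequence
`0 → L → M → N → 0` of finitely generated modules with `L, N ∈ C`, we have `M ∈ C`. -/
def ExtClosed (C : Set (ModuleCat.{u} A)) : Prop :=
  ∀ (L M N : ModuleCat.{u} A), Module.Finite A M →
    ∀ (f : L →ₗ[A] M) (g : M →ₗ[A] N),
      Function.Injective f → Function.Surjective g →
      LinearMap.range f = LinearMap.ker g →
      L ∈ C → N ∈ C → M ∈ C

end Defs



theorem exists_embed_free (D : Type u) [CommRing D] [IsDomain D] (L : Type u) [AddCommGroup L]
    [Module D L] [Module.Finite D L] [NoZeroSMulDivisors D L] :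
    ∃ (k : ℕ) (f : L →ₗ[D] (Fin k → D)), Function.Injective f := by
  classical
  obtain ⟨n, v, hv⟩ := Module.Finite.exists_fin (R := D) (M := L)
  obtain ⟨I, hli, hmax⟩ := exists_maximal_linearIndepOn D v
  haveI : Fintype I := Fintype.ofFinite I
  -- coefficients
  choose c hc0 hcmem using fun (i : Fin n) (hi : i ∉ I) => hmax i hi
  set F := Submodule.span D (v '' I) with hF
  set c' : Fin n → D := fun i => if hi : i ∈ I then 1 else c i hi with hc'
  have hc'0 : ∀ i, c' i ≠ 0 := by
    intro i
    by_cases hi : i ∈ I <;> simp [hc', hi, hc0]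
  have hc'mem : ∀ i, c' i • v i ∈ F := by
    intro i
    by_cases hi : i ∈ I
    · simp only [hc', dif_pos hi, one_smul]
      exact Submodule.subset_span ⟨i, hi, rfl⟩
    · simpa [hc', dif_neg hi] using hcmem i hi
  set d : D := ∏ i : Fin n, c' i with hd
  have hd0 : d ≠ 0 := Finset.prod_ne_zero_iff.mpr fun i _ => hc'0 i
  have hdmem : ∀ x : L, d • x ∈ F := by
    intro x
    have hx : x ∈ Submodule.span D (Set.range v) := hv ▸ Submodule.mem_top
    induction hx using Submodule.span_induction with
    | mem y hy =>
      obtain ⟨i, rfl⟩ := hy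
      rw [hd, ← Finset.prod_erase_mul Finset.univ _ (Finset.mem_univ i), mul_smul]
      exact F.smul_mem _ (hc'mem i)
    | zero => simpa using F.zero_mem
    | add y z _ _ hy hz => rw [smul_add]; exact F.add_mem hy hz
    | smul a y _ hy => rw [smul_comm]; exact F.smul_mem a hy
  -- the multiplication map into F
  set g : L →ₗ[D] F := LinearMap.codRestrict F (LinearMap.lsmul D L d) hdmem with hg
  have hginj : Function.Injective g := by
    intro x y hxy
    have : d • x = d • y := congrArg Subtype.val hxy
    exact smul_right_injective L hd0 this
  -- F is free with basis indexed by I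
  have himg : v '' I = Set.range fun x : I => v x := by
    rw [Set.image_eq_range]
  set b : Module.Basis I D F := Module.Basis.span hli |>.map (LinearEquiv.ofEq _ _ (by rw [hF, himg]))
  set e : F ≃ₗ[D] (I → D) :=
    b.repr ≪≫ₗ Finsupp.linearEquivFunOnFinite D D I
  set e2 : (I → D) ≃ₗ[D] (Fin (Fintype.card I) → D) :=
    LinearEquiv.funCongrLeft D D (Fintype.equivFin I).symm
  exact ⟨Fintype.card I, (e2.toLinearMap.comp (e.toLinearMap.comp g)),
    e2.injective.comp (e.injective.comp hginj)⟩

variable {R : Type u} [CommRing R]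

section AssBasic
variable {M : Type*} [AddCommGroup M] [Module R M]

theorem ass_sub_union (N : Submodule R M) :
    associatedPrimes R M ⊆ associatedPrimes R N ∪ associatedPrimes R (M ⧸ N) := by
  exact associatedPrimes.subset_union_of_exact (f := N.subtype) (g := N.mkQ)
    Subtype.val_injective (LinearMap.exact_subtype_mkQ N)

theorem ass_ext {L N : Type*} [AddCommGroup L] [Module R L] [AddCommGroup N] [Module R N]
    (f : L →ₗ[R] M) (g : M →ₗ[R] N) (hf : Function.Injective f) (hg : Function.Surjective g)
    (hfg : LinearMap.range f = LinearMap.ker g) :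
    associatedPrimes R M ⊆ associatedPrimes R L ∪ associatedPrimes R N := by
  intro p hPM
  rcases ass_sub_union (LinearMap.ker g) hPM with h | h
  · left
    rw [← hfg] at h
    rwa [← (LinearEquiv.AssociatedPrimes.eq (LinearEquiv.ofInjective f hf))] at h
  · right
    rwa [LinearEquiv.AssociatedPrimes.eq (g.quotKerEquivOfSurjective hg)] at h

theorem ass_quotient_prime (p : Ideal R) (hp : p.IsPrime) [IsNoetherianRing R] :
    associatedPrimes R (R ⧸ p) = {p} := by
  rw [associatedPrimes.eq_singleton_of_isPrimary hp.isPrimary, hp.radical]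

end AssBasic

theorem colon_bot_singleton_eq {S P : Type*} [CommRing S] [AddCommGroup P] [Module S P] (x : P) :
    (⊥ : Submodule S P).colon {x} = (Submodule.span S {x}).annihilator := by
  ext r
  rw [Submodule.mem_colon_singleton, Submodule.mem_bot, Submodule.mem_annihilator_span_singleton]

theorem isAssociatedPrime_iff_ann {S P : Type*} [CommRing S] [IsNoetherianRing S] [AddCommGroup P]
    [Module S P] {I : Ideal S} :
    IsAssociatedPrime I P ↔ I.IsPrime ∧ ∃ x : P, I = (Submodule.span S {x}).annihilator := by
  simp only [isAssociatedPrime_iff, colon_bot_singleton_eq]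

section Helpers
variable {R : Type u} [CommRing R] [IsNoetherianRing R]
variable {C : Set (ModuleCat.{u} R)}
variable (hIso : ∀ M N : ModuleCat.{u} R, (M ≃ₗ[R] N) → M ∈ C → N ∈ C)
variable (hZero : ∀ M : ModuleCat.{u} R, Subsingleton M → M ∈ C)
variable (hSub : ∀ M ∈ C, ∀ N : Submodule R M, ModuleCat.of R N ∈ C)
variable (hExt : ∀ (L M N : ModuleCat.{u} R), Module.Finite R M →
    ∀ (f : L →ₗ[R] M) (g : M →ₗ[R] N),
      Function.Injective f → Function.Surjective g →
      LinearMap.range f = LinearMap.ker g → L ∈ C → N ∈ C → M ∈ C)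

include hIso hZero hExt in
theorem pi_mem (X : Type u) [AddCommGroup X] [Module R X] [Module.Finite R X]
    (hX : ModuleCat.of R X ∈ C) (k : ℕ) : ModuleCat.of R (Fin k → X) ∈ C := by
  induction k with
  | zero =>
    exact hZero _ ⟨fun a b => funext fun i => i.elim0⟩
  | succ k ih =>
    set f : X →ₗ[R] (Fin (k+1) → X) := LinearMap.single R (fun _ : Fin (k+1) => X) 0 with hfdef
    set g : (Fin (k+1) → X) →ₗ[R] (Fin k → X) := LinearMap.funLeft R X Fin.succ with hgdef
    have hfinj : Function.Injective f := by
      intro a b hab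
      have := congrFun hab 0
      simpa [hfdef] using this
    have hgsurj : Function.Surjective g :=
      LinearMap.funLeft_surjective_of_injective R X _ (Fin.succ_injective k)
    have hrk : LinearMap.range f = LinearMap.ker g := by
      ext w
      simp only [LinearMap.mem_range, LinearMap.mem_ker]
      constructor
      · rintro ⟨x, rfl⟩
        funext i
        simp [hgdef, hfdef, LinearMap.funLeft_apply, Pi.single_eq_of_ne (Fin.succ_ne_zero i)]
      · intro hw
        refine ⟨w 0, funext fun j => ?_⟩
        induction j using Fin.cases with
        | zero => simp [hfdef]
        | succ i =>
          have h2 : w i.succ = 0 := congrFun hw i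
          simp [hfdef, h2, Pi.single_eq_of_ne (Fin.succ_ne_zero i)]
    exact hExt (ModuleCat.of R X) (ModuleCat.of R (Fin (k+1) → X)) (ModuleCat.of R (Fin k → X))
      (by infer_instance : Module.Finite R (Fin (k+1) → X)) f g hfinj hgsurj hrk hX ih

include hIso hZero hSub hExt in
theorem layer_mem (p : Ideal R) (hp : p.IsPrime) (hpC : ModuleCat.of R (R ⧸ p) ∈ C)
    (W : Type u) [AddCommGroup W] [Module R W] [Module.Finite R W]
    (hann : ∀ r ∈ p, ∀ w : W, r • w = 0)
    (hreg : ∀ s ∉ p, ∀ w : W, s • w = 0 → w = 0) :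
    ModuleCat.of R W ∈ C := by
  haveI := hp
  have htors : Module.IsTorsionBySet R W p := fun w rp => hann rp.1 rp.2 w
  letI : Module (R ⧸ p) W := htors.module
  letI : IsScalarTower R (R ⧸ p) W := htors.isScalarTower
  haveI : Module.Finite (R ⧸ p) W := Module.Finite.of_restrictScalars_finite R (R ⧸ p) W
  haveI : NoZeroSMulDivisors (R ⧸ p) W := by
    refine ⟨fun {d} {w} hdw => ?_⟩
    obtain ⟨s, rfl⟩ := Ideal.Quotient.mk_surjective d
    by_cases hs : s ∈ p
    · left
      exact Ideal.Quotient.eq_zero_iff_mem.mpr hs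
    · right
      refine hreg s hs w ?_
      rwa [htors.mk_smul] at hdw
  obtain ⟨k, f, hf⟩ := exists_embed_free (R ⧸ p) W
  set f' : W →ₗ[R] (Fin k → R ⧸ p) := f.restrictScalars R with hf'
  have hf'inj : Function.Injective f' := hf
  have hpi : ModuleCat.of R (Fin k → R ⧸ p) ∈ C := pi_mem hIso hZero hExt _ hpC k
  have hrange := hSub _ hpi (LinearMap.range f')
  exact hIso _ (ModuleCat.of R W) (LinearEquiv.ofInjective f' hf'inj).symm hrange

end Helpers

section Coprimary
variable {R : Type u} [CommRing R] [IsNoetherianRing R]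
variable {M : Type*} [AddCommGroup M] [Module R M] [Module.Finite R M]

theorem smul_pow_eq_zero (a : R) (h : ∀ q ∈ associatedPrimes R M, a ∈ q) :
    ∃ n : ℕ, ∀ x : M, a ^ n • x = 0 := by
  have hNoeth : IsNoetherian R M := inferInstance
  set f : Module.End R M := LinearMap.lsmul R M a with hf
  have hfpow : ∀ (n : ℕ) (x : M), (f ^ n) x = a ^ n • x := by
    intro n
    induction n with
    | zero => intro x; simp
    | succ n ih =>
      intro x
      rw [pow_succ, pow_succ, Module.End.mul_apply, ih, hf, LinearMap.lsmul_apply, mul_smul,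
        smul_comm]
  have mono : Monotone fun n => LinearMap.ker (f ^ n) := by
    intro i j hij
    intro x hx
    simp only [LinearMap.mem_ker, SetLike.mem_coe] at hx ⊢
    obtain ⟨k, rfl⟩ := Nat.exists_eq_add_of_le hij
    rw [add_comm, pow_add, Module.End.mul_apply, hx, map_zero]
  obtain ⟨n, hn⟩ := monotone_stabilizes_iff_noetherian.mpr hNoeth ⟨_, mono⟩
  refine ⟨n, fun x => ?_⟩
  by_contra hx0
  -- the range of f^n is a nontrivial submodule
  set Mr : Submodule R M := LinearMap.range (f ^ n) with hMr
  have : Nontrivial Mr := by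
    refine ⟨⟨⟨(f ^ n) x, ⟨x, rfl⟩⟩, 0, fun hc => hx0 ?_⟩⟩
    have := congrArg Subtype.val hc
    rw [← hfpow n x]
    simpa using this
  obtain ⟨P, hP⟩ := associatedPrimes.nonempty R Mr
  obtain ⟨hPp, y, hy⟩ := isAssociatedPrime_iff_ann.mp hP
  have hy0 : y ≠ 0 := by
    rintro rfl
    apply hPp.ne_top
    rw [hy, Submodule.span_singleton_eq_bot.mpr rfl, Submodule.annihilator_bot]
  have haP : a ∈ P := h P ((AssociatedPrimes.mem_iff.mp hP).map_of_injective Mr.subtype Subtype.val_injective)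
  have hay : a • y = 0 := by
    rw [hy, Submodule.mem_annihilator_span_singleton] at haP
    exact haP
  obtain ⟨z, hz⟩ := y.2
  -- a • (f^n z) = 0, so z ∈ ker f^(n+1) = ker f^n, so y = 0
  have : (f ^ (n + 1)) z = 0 := by
    rw [pow_succ', Module.End.mul_apply, hz]
    show f y.1 = 0
    have h2 := congrArg Subtype.val hay
    simpa [hf] using h2
  have hkk : LinearMap.ker (f ^ n) = LinearMap.ker (f ^ (n + 1)) :=
    hn (n + 1) (Nat.le_succ n)
  have hker : z ∈ LinearMap.ker (f ^ n) := by
    rw [hkk]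
    exact this
  apply hy0
  ext
  rw [← hz]
  exact hker

theorem pow_le_ann (p : Ideal R) (h : ∀ q ∈ associatedPrimes R M, p ≤ q) :
    ∃ n : ℕ, p ^ n ≤ Module.annihilator R M := by
  have hrad : p ≤ (Module.annihilator R M).radical := by
    intro a ha
    obtain ⟨n, hn⟩ := smul_pow_eq_zero a (fun q hq => h q hq ha)
    exact ⟨n, Module.mem_annihilator.mpr hn⟩
  obtain ⟨n, hn⟩ := Ideal.exists_radical_pow_le_of_fg (Module.annihilator R M)
    (IsNoetherian.noetherian _)
  exact ⟨n, le_trans (Ideal.pow_right_mono hrad n) hn⟩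

end Coprimary

section Cop2
variable {R : Type u} [CommRing R] [IsNoetherianRing R]
variable {C : Set (ModuleCat.{u} R)}
variable (hIso : ∀ M N : ModuleCat.{u} R, (M ≃ₗ[R] N) → M ∈ C → N ∈ C)
variable (hZero : ∀ M : ModuleCat.{u} R, Subsingleton M → M ∈ C)
variable (hSub : ∀ M ∈ C, ∀ N : Submodule R M, ModuleCat.of R N ∈ C)
variable (hExt : ∀ (L M N : ModuleCat.{u} R), Module.Finite R M →
    ∀ (f : L →ₗ[R] M) (g : M →ₗ[R] N),
      Function.Injective f → Function.Surjective g →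
      LinearMap.range f = LinearMap.ker g → L ∈ C → N ∈ C → M ∈ C)

include hIso hZero hSub hExt in
theorem coprimary_mem (p : Ideal R) (hp : p.IsPrime)
    (M : Type u) [AddCommGroup M] [Module R M] [Module.Finite R M]
    (hass : associatedPrimes R M ⊆ {p}) (hpC : ModuleCat.of R (R ⧸ p) ∈ C) :
    ModuleCat.of R M ∈ C := by
  haveI : IsNoetherian R M := isNoetherian_of_isNoetherianRing_of_finite R M
  -- annihilators of nonzero elements are contained in p
  have hannle : ∀ x : M, x ≠ 0 → ∀ s : R, s • x = 0 → s ∈ p := by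
    intro x hx s hs
    obtain ⟨P, hP, hle⟩ := exists_le_isAssociatedPrime_of_isNoetherianRing R x hx
    have hPp : P = p := hass hP
    subst hPp
    exact hle (by rw [colon_bot_singleton_eq]; exact (Submodule.mem_annihilator_span_singleton x s).mpr hs)
  obtain ⟨n, hn⟩ := pow_le_ann p (fun q hq => le_of_eq (hass hq).symm)
  -- the filtration by p-power torsion
  set N : ℕ → Submodule R M := fun i => Submodule.torsionBySet R M ↑(p ^ i) with hN
  have hmemN : ∀ (i : ℕ) (x : M), x ∈ N i ↔ ∀ r ∈ p ^ i, r • x = 0 := by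
    intro i x
    rw [hN]
    constructor
    · intro hx r hr
      exact (Submodule.mem_torsionBySet_iff _ _).mp hx ⟨r, hr⟩
    · intro hx
      exact (Submodule.mem_torsionBySet_iff _ _).mpr fun ⟨r, hr⟩ => hx r hr
  have hle : ∀ i, N i ≤ N (i + 1) := by
    intro i x hx
    rw [hmemN] at hx ⊢
    intro r hr
    exact hx r (Ideal.pow_le_pow_right (Nat.le_succ i) hr)
  have hNtop : N n = ⊤ := by
    rw [eq_top_iff]
    intro x _
    rw [hmemN]
    intro r hr
    exact Module.mem_annihilator.mp (hn hr) x
  have hstep : ∀ i : ℕ, ModuleCat.of R ↥(N i) ∈ C := by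
    intro i
    induction i with
    | zero =>
      refine hZero _ ⟨fun a b => Subtype.ext ?_⟩
      have ha : a.1 = 0 := by
        have := (hmemN 0 a.1).mp a.2 1 (by simp)
        simpa using this
      have hb : b.1 = 0 := by
        have := (hmemN 0 b.1).mp b.2 1 (by simp)
        simpa using this
      rw [ha, hb]
    | succ i ih =>
      set K : Submodule R ↥(N (i + 1)) := Submodule.comap (N (i + 1)).subtype (N i) with hK
      haveI : Module.Finite R ↥(N (i + 1)) :=
        Module.Finite.iff_fg.mpr (IsNoetherian.noetherian _)
      have hWmem : ModuleCat.of R (↥(N (i + 1)) ⧸ K) ∈ C := by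
        refine layer_mem hIso hZero hSub hExt p hp hpC _ ?_ ?_
        · -- p kills the layer
          intro r hr w
          obtain ⟨x, rfl⟩ := Submodule.Quotient.mk_surjective K w
          rw [← Submodule.Quotient.mk_smul, Submodule.Quotient.mk_eq_zero]
          show (r • x).1 ∈ N i
          rw [hmemN]
          intro t ht
          have htr : t * r ∈ p ^ (i + 1) := by
            rw [pow_succ]
            exact Ideal.mul_mem_mul ht hr
          have h3 := (hmemN (i + 1) x.1).mp x.2 (t * r) htr
          rw [mul_smul] at h3
          exact h3
        · -- elements outside p act injectively on the layer
          intro s hs w hsw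
          obtain ⟨x, rfl⟩ := Submodule.Quotient.mk_surjective K w
          rw [← Submodule.Quotient.mk_smul, Submodule.Quotient.mk_eq_zero] at hsw
          rw [Submodule.Quotient.mk_eq_zero]
          show x.1 ∈ N i
          rw [hmemN]
          intro t ht
          by_contra htx
          have hsx : (s • x).1 ∈ N i := hsw
          have h1 : s • (t • x.1) = 0 := by
            have := (hmemN i (s • x).1).mp hsx t ht
            show s • t • x.1 = 0
            rw [smul_comm]
            exact this
          exact hs (hannle (t • x.1) htx s h1)
      refine hExt (ModuleCat.of R ↥(N i)) (ModuleCat.of R ↥(N (i + 1)))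
        (ModuleCat.of R (↥(N (i + 1)) ⧸ K))
        (by infer_instance : Module.Finite R ↥(N (i + 1)))
        (Submodule.inclusion (hle i)) K.mkQ
        (Submodule.inclusion_injective _) (Submodule.mkQ_surjective K) ?_ ih hWmem
      rw [Submodule.ker_mkQ, Submodule.range_inclusion]
  have hMiso : (↥(N n) : Type u) ≃ₗ[R] M := (LinearEquiv.ofEq _ _ hNtop).trans (Submodule.topEquiv)
  exact hIso (ModuleCat.of R ↥(N n)) (ModuleCat.of R M) hMiso (hstep n)

end Cop2

section MainLemma
variable {R : Type u} [CommRing R] [IsNoetherianRing R]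
variable {C : Set (ModuleCat.{u} R)}
variable (hIso : ∀ M N : ModuleCat.{u} R, (M ≃ₗ[R] N) → M ∈ C → N ∈ C)
variable (hZero : ∀ M : ModuleCat.{u} R, Subsingleton M → M ∈ C)
variable (hSub : ∀ M ∈ C, ∀ N : Submodule R M, ModuleCat.of R N ∈ C)
variable (hExt : ∀ (L M N : ModuleCat.{u} R), Module.Finite R M →
    ∀ (f : L →ₗ[R] M) (g : M →ₗ[R] N),
      Function.Injective f → Function.Surjective g →
      LinearMap.range f = LinearMap.ker g → L ∈ C → N ∈ C → M ∈ C)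

-- assoc primes of a cyclic module
theorem ass_span_singleton {Q : Type*} [AddCommGroup Q] [Module R Q] (x : Q) (q : Ideal R)
    (hq : q = (Submodule.span R {x}).annihilator) (hqPrime : q.IsPrime) :
    associatedPrimes R ↥(Submodule.span R {x}) = {q} := by
  have htors : Ideal.torsionOf R Q x = q := by
    ext r
    rw [Ideal.mem_torsionOf_iff, hq]
    exact (Submodule.mem_annihilator_span_singleton x r).symm
  rw [← LinearEquiv.AssociatedPrimes.eq (Ideal.quotTorsionOfEquivSpanSingleton R Q x), htors,
    ass_quotient_prime q hqPrime]

include hIso hZero hSub hExt in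
theorem main_mem (M : Type u) [AddCommGroup M] [Module R M] [Module.Finite R M]
    (h : ∀ q ∈ associatedPrimes R M, ModuleCat.of R (R ⧸ q) ∈ C) :
    ModuleCat.of R M ∈ C := by
  haveI : IsNoetherian R M := isNoetherian_of_isNoetherianRing_of_finite R M
  have wf : WellFounded ((· > ·) : Submodule R M → Submodule R M → Prop) :=
    (isNoetherian_iff (R := R) (M := M)).mp inferInstance
  have key : ∀ N : Submodule R M,
      (∀ q ∈ associatedPrimes R (M ⧸ N), ModuleCat.of R (R ⧸ q) ∈ C) →
      ModuleCat.of R (M ⧸ N) ∈ C := by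
    intro N
    induction N using WellFounded.induction wf with
    | _ N IH =>
    intro hq
    by_cases hQ : Subsingleton (M ⧸ N)
    · exact hZero _ hQ
    haveI : Nontrivial (M ⧸ N) := not_subsingleton_iff_nontrivial.mp hQ
    obtain ⟨p, hpAss⟩ := associatedPrimes.nonempty R (M ⧸ N)
    obtain ⟨hpPrime, x, hx⟩ := isAssociatedPrime_iff_ann.mp hpAss
    have hx0 : x ≠ 0 := by
      rintro rfl
      apply hpPrime.ne_top
      rw [hx, Submodule.span_singleton_eq_bot.mpr rfl, Submodule.annihilator_bot]
    set F := {K : Submodule R (M ⧸ N) | associatedPrimes R ↥K ⊆ {p}} with hF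
    have hbotF : (⊥ : Submodule R (M ⧸ N)) ∈ F := by
      have : associatedPrimes R ↥(⊥ : Submodule R (M ⧸ N)) = ∅ :=
        associatedPrimes.eq_empty_of_subsingleton
      simp only [hF, Set.mem_setOf_eq, this]
      exact Set.empty_subset _
    obtain ⟨K, hKF, hKmax⟩ :=
      (set_has_maximal_iff_noetherian.mpr (inferInstance : IsNoetherian R (M ⧸ N))) F ⟨⊥, hbotF⟩
    have hxF : (Submodule.span R {x}) ∈ F := by
      rw [hF, Set.mem_setOf_eq, ass_span_singleton x p hx hpPrime]
    have hKbot : K ≠ ⊥ := by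
      rintro rfl
      exact hKmax _ hxF (bot_lt_iff_ne_bot.mpr (Submodule.span_singleton_eq_bot.not.mpr hx0))
    haveI : Module.Finite R ↥K := Module.Finite.iff_fg.mpr (IsNoetherian.noetherian _)
    have hKC : ModuleCat.of R ↥K ∈ C :=
      coprimary_mem hIso hZero hSub hExt p hpPrime ↥K hKF (hq p hpAss)
    -- every associated prime of the quotient is an associated prime of M⧸N different from p
    have hassQK : ∀ q ∈ associatedPrimes R ((M ⧸ N) ⧸ K),
        q ∈ associatedPrimes R (M ⧸ N) ∧ q ≠ p := by
      intro q hqq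
      obtain ⟨hqPrime, y, hy⟩ := isAssociatedPrime_iff_ann.mp hqq
      obtain ⟨x', rfl⟩ := Submodule.Quotient.mk_surjective K y
      have hy0 : (Submodule.Quotient.mk x' : (M ⧸ N) ⧸ K) ≠ 0 := by
        rintro hy0
        apply hqPrime.ne_top
        rw [hy, hy0, Submodule.span_singleton_eq_bot.mpr rfl, Submodule.annihilator_bot]
      set L' : Submodule R (M ⧸ N) := K ⊔ Submodule.span R {x'} with hL'
      have hKL' : K < L' := by
        rw [hL']
        refine lt_of_le_of_ne le_sup_left fun hE => ?_
        apply hy0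
        rw [Submodule.Quotient.mk_eq_zero]
        have hmem2 : x' ∈ K ⊔ Submodule.span R {x'} :=
          le_sup_right (α := Submodule R (M ⧸ N)) (Submodule.mem_span_singleton_self x')
        rwa [← hE] at hmem2
      set φ : ↥L' →ₗ[R] ((M ⧸ N) ⧸ K) := K.mkQ.comp L'.subtype with hφ
      have hkerφ : LinearMap.ker φ = Submodule.comap L'.subtype K := by
        ext z
        simp [hφ, Submodule.Quotient.mk_eq_zero]
      have hrangeφ : LinearMap.range φ =
          Submodule.span R {(Submodule.Quotient.mk x' : (M ⧸ N) ⧸ K)} := by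
        apply le_antisymm
        · rintro z ⟨w, rfl⟩
          have hw : w.1 ∈ K ⊔ Submodule.span R {x'} := w.2
          obtain ⟨k, hk, v, hv, hkv⟩ := Submodule.mem_sup.mp hw
          obtain ⟨r, rfl⟩ := Submodule.mem_span_singleton.mp hv
          have : φ w = r • (Submodule.Quotient.mk x' : (M ⧸ N) ⧸ K) := by
            show K.mkQ w.1 = _
            rw [← hkv]
            simp [Submodule.Quotient.mk_eq_zero, hk]
          rw [this]
          exact Submodule.smul_mem _ r (Submodule.mem_span_singleton_self _)
        · rw [Submodule.span_le, Set.singleton_subset_iff]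
          exact ⟨⟨x', le_sup_right (α := Submodule R (M ⧸ N)) (Submodule.mem_span_singleton_self x')⟩, rfl⟩
      have h1 := ass_sub_union (Submodule.comap L'.subtype K) (M := ↥L')
      have h2 : associatedPrimes R ↥(Submodule.comap L'.subtype K) = associatedPrimes R ↥K :=
        LinearEquiv.AssociatedPrimes.eq (Submodule.comapSubtypeEquivOfLe le_sup_left)
      have h3 : associatedPrimes R (↥L' ⧸ Submodule.comap L'.subtype K) = {q} := by
        rw [← hkerφ, LinearEquiv.AssociatedPrimes.eq (LinearMap.quotKerEquivRange φ), hrangeφ]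
        exact ass_span_singleton _ q hy hqPrime
      have hAssL' : associatedPrimes R ↥L' ⊆ {p} ∪ {q} := by
        intro q' hq'
        rcases h1 hq' with h' | h'
        · left; exact hKF (h2 ▸ h')
        · right; rw [h3] at h'; exact h'
      have hL'F : L' ∉ F := fun hmem => hKmax L' hmem hKL'
      have hqL' : q ∈ associatedPrimes R ↥L' ∧ q ≠ p := by
        rw [hF, Set.mem_setOf_eq] at hL'F
        obtain ⟨q', hq'mem, hq'p⟩ := Set.not_subset.mp hL'F
        rcases hAssL' hq'mem with h' | h'
        · exact absurd h' hq'p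
        · rw [Set.mem_singleton_iff] at h'
          subst h'
          refine ⟨hq'mem, fun hqp => hq'p ?_⟩
          rw [hqp]; rfl
      exact ⟨(AssociatedPrimes.mem_iff.mp hqL'.1).map_of_injective L'.subtype
        Subtype.val_injective, hqL'.2⟩
    -- the quotient is the quotient of M by a strictly bigger submodule
    set N' := Submodule.comap N.mkQ K with hN'
    have hmapN' : Submodule.map N.mkQ N' = K :=
      Submodule.map_comap_eq_of_surjective (Submodule.mkQ_surjective N) K
    have hNN' : N < N' := by
      refine lt_of_le_of_ne (fun z hz => ?_) fun hE => ?_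
      · show N.mkQ z ∈ K
        have : N.mkQ z = 0 := by
          rw [← LinearMap.mem_ker, Submodule.ker_mkQ]; exact hz
        rw [this]; exact K.zero_mem
      · apply hKbot
        rw [← hmapN', ← hE]
        apply le_bot_iff.mp
        rintro z ⟨w, hw, rfl⟩
        simp only [Submodule.mkQ_apply, Submodule.mem_bot, Submodule.Quotient.mk_eq_zero]
        exact hw
    have hisoQuot : ((M ⧸ N) ⧸ K) ≃ₗ[R] (M ⧸ N') :=
      (Submodule.quotEquivOfEq K (Submodule.map N.mkQ N') hmapN'.symm).trans
        (Submodule.quotientQuotientEquivQuotient N N' (le_of_lt hNN'))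
    have hQ'C : ModuleCat.of R (M ⧸ N') ∈ C := by
      refine IH N' hNN' ?_
      intro q hq'
      have : q ∈ associatedPrimes R ((M ⧸ N) ⧸ K) := by
        rwa [LinearEquiv.AssociatedPrimes.eq hisoQuot]
      exact hq q (hassQK q this).1
    have hQKC : ModuleCat.of R ((M ⧸ N) ⧸ K) ∈ C :=
      hIso (ModuleCat.of R (M ⧸ N')) _ hisoQuot.symm hQ'C
    refine hExt (ModuleCat.of R ↥K) (ModuleCat.of R (M ⧸ N)) (ModuleCat.of R ((M ⧸ N) ⧸ K))
      (by infer_instance : Module.Finite R (M ⧸ N)) K.subtype K.mkQ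
      Subtype.val_injective (Submodule.mkQ_surjective K) ?_ hKC hQKC
    rw [Submodule.range_subtype, Submodule.ker_mkQ]
  have e : (M ⧸ (⊥ : Submodule R M)) ≃ₗ[R] M := Submodule.quotEquivOfEqBot ⊥ rfl
  have hb : ModuleCat.of R (M ⧸ (⊥ : Submodule R M)) ∈ C := by
    refine key ⊥ fun q hq' => ?_
    rw [LinearEquiv.AssociatedPrimes.eq e] at hq'
    exact h q hq'
  exact hIso _ (ModuleCat.of R M) e hb

end MainLemma

section Final
variable {R : Type u} [CommRing R] [IsNoetherianRing R]

-- If the annihilator of an element is prime, R/q embeds as the span of the element.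
theorem quot_mem_of_ass {C : Set (ModuleCat.{u} R)}
    (hIso : ∀ M N : ModuleCat.{u} R, (M ≃ₗ[R] N) → M ∈ C → N ∈ C)
    (hSub : ∀ M ∈ C, ∀ N : Submodule R M, ModuleCat.of R N ∈ C)
    (X : ModuleCat.{u} R) (hX : X ∈ C) (q : Ideal R) (hq : IsAssociatedPrime q X) :
    ModuleCat.of R (R ⧸ q) ∈ C := by
  obtain ⟨hqPrime, x, hx⟩ := isAssociatedPrime_iff_ann.mp hq
  have htors : Ideal.torsionOf R X x = q := by
    ext r
    rw [Ideal.mem_torsionOf_iff, hx]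
    exact (Submodule.mem_annihilator_span_singleton x r).symm
  have e : (↥(Submodule.span R {x}) : Type u) ≃ₗ[R] (R ⧸ q) :=
    ((Submodule.quotEquivOfEq q (Ideal.torsionOf R X x) htors.symm).trans
      (Ideal.quotTorsionOfEquivSpanSingleton R X x)).symm
  exact hIso (ModuleCat.of R ↥(Submodule.span R {x})) (ModuleCat.of R (R ⧸ q)) e
    (hSub X hX (Submodule.span R {x}))

theorem class_subset {C₁ C₂ : Set (ModuleCat.{u} R)}
    (h₁ : IsModSubcat R C₁ ∧ SubmoduleClosed R C₁ ∧ ExtClosed R C₁)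
    (h₂ : IsModSubcat R C₂ ∧ SubmoduleClosed R C₂ ∧ ExtClosed R C₂)
    (hAss : ({p : PrimeSpectrum R | ∃ M ∈ C₁, IsAssociatedPrime p.asIdeal M} : Set (PrimeSpectrum R)) ⊆
      {p : PrimeSpectrum R | ∃ M ∈ C₂, IsAssociatedPrime p.asIdeal M}) :
    C₁ ⊆ C₂ := by
  intro M hM
  obtain ⟨⟨hIso₁, hZero₁, hFin₁⟩, hSub₁, hExt₁⟩ := h₁
  obtain ⟨⟨hIso₂, hZero₂, hFin₂⟩, hSub₂, hExt₂⟩ := h₂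
  haveI : Module.Finite R ↥M := hFin₁ M hM
  have hmain : ModuleCat.of R ↥M ∈ C₂ := by
    refine main_mem hIso₂ hZero₂ hSub₂ hExt₂ ↥M fun q hq => ?_
    have hqP : (⟨q, hq.isPrime⟩ : PrimeSpectrum R) ∈
        {p : PrimeSpectrum R | ∃ M ∈ C₁, IsAssociatedPrime p.asIdeal M} := ⟨M, hM, hq⟩
    obtain ⟨X, hXC, hXq⟩ := hAss hqP
    exact quot_mem_of_ass hIso₂ hSub₂ X hXC q hXq
  exact hIso₂ (ModuleCat.of R ↥M) M (LinearEquiv.refl R ↥M) hmain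

end Final

theorem ass_bijection_torsionFree_classes
    (R : Type u) [CommRing R] [IsNoetherianRing R] :
    Function.Bijective
      (fun C : {C : Set (ModuleCat.{u} R) //
          IsModSubcat R C ∧ SubmoduleClosed R C ∧ ExtClosed R C} =>
        ({p : PrimeSpectrum R | ∃ M ∈ C.1, IsAssociatedPrime p.asIdeal M} :
          Set (PrimeSpectrum R))) := by
  constructor
  · rintro ⟨C₁, h₁⟩ ⟨C₂, h₂⟩ hEq
    simp only [Subtype.mk.injEq]
    exact le_antisymm (class_subset h₁ h₂ (le_of_eq hEq)) (class_subset h₂ h₁ (le_of_eq hEq.symm))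
  · intro S
    set CS : Set (ModuleCat.{u} R) := {M | Module.Finite R ↥M ∧
      ∀ p : PrimeSpectrum R, IsAssociatedPrime p.asIdeal ↥M → p ∈ S} with hCS
    have hIso : ∀ M N : ModuleCat.{u} R, (↥M ≃ₗ[R] ↥N) → M ∈ CS → N ∈ CS := by
      intro M N e hM
      haveI : Module.Finite R ↥M := hM.1
      refine ⟨Module.Finite.equiv e, fun p hp => hM.2 p ?_⟩
      rwa [LinearEquiv.isAssociatedPrime_iff e]
    have hZero : ∀ M : ModuleCat.{u} R, Subsingleton ↥M → M ∈ CS := by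
      intro M hs
      haveI := hs
      refine ⟨⟨by rw [Subsingleton.elim (⊤ : Submodule R ↥M) ⊥]; exact Submodule.fg_bot⟩,
        fun p hp => absurd hp not_isAssociatedPrime_of_subsingleton⟩
    have hSubCS : SubmoduleClosed R CS := by
      intro M hM N
      haveI : Module.Finite R ↥M := hM.1
      haveI : IsNoetherian R ↥M := isNoetherian_of_isNoetherianRing_of_finite R ↥M
      refine ⟨Module.Finite.iff_fg.mpr (IsNoetherian.noetherian N), fun p hp => hM.2 p ?_⟩
      exact hp.map_of_injective N.subtype Subtype.val_injective
    have hExtCS : ExtClosed R CS := by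
      intro L M N hMfin f g hf hg hfg hL hN
      refine ⟨hMfin, fun p hp => ?_⟩
      rcases ass_ext f g hf hg hfg hp with h' | h'
      · exact hL.2 p h'
      · exact hN.2 p h'
    refine ⟨⟨CS, ⟨hIso, hZero, fun M hM => hM.1⟩, hSubCS, hExtCS⟩, ?_⟩
    apply le_antisymm
    · rintro p ⟨M, hM, hp⟩
      exact hM.2 p hp
    · intro p hp
      refine ⟨ModuleCat.of R (R ⧸ p.asIdeal), ⟨?_, ?_⟩, ?_⟩
      · exact Module.Finite.quotient R _
      · intro q hq
        have : q.asIdeal ∈ associatedPrimes R (R ⧸ p.asIdeal) := hq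
        rw [ass_quotient_prime p.asIdeal p.isPrime] at this
        have : q = p := PrimeSpectrum.ext this
        rwa [this]
      · have : p.asIdeal ∈ associatedPrimes R (R ⧸ p.asIdeal) := by
          rw [ass_quotient_prime p.asIdeal p.isPrime]; rfl
        exact this
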